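/- Let φ(τ) be positive and continuous with φ(0) = 1, and define ψ(τ) = ∫₀^τ φ(s) ds. Suppose φ = e^{−8θ ∫₀^τ z₂(s)³ ds} where z₂(τ) = pσ² φ(τ) F(σ² ψ(τ)) and F(a) = ∫₀^∞ e^{4au²−u} u du. Then for m ≥ 2, the function z_m(τ) = (pσ^m φ(τ)^{m/2} / (m−2)!!) ∫₀^∞ e^{4σ²ψ(τ)u² − u} u^{m−1} du satisfies the ODE ż_m = 4m (z_{m+2} − θ z₂³ z_m) for all even m ≥ 2 (with (0)!! = 1), on any interval where ψ(τ) ≤ 0. -/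

import Mathlib

open MeasureTheory

/-- `F(a) = ∫₀^∞ e^{4au² − u} u du`. -/
noncomputable def Fint (a : ℝ) : ℝ :=
  ∫ u in Set.Ioi (0 : ℝ), Real.exp (4 * a * u ^ 2 - u) * u

/-- The characteristic-curve coordinates
`z_m(τ) = (p σ^m φ(τ)^{m/2}/(m−2)!!) ∫₀^∞ e^{4σ²ψ(τ)u² − u} u^{m−1} du`. -/
noncomputable def zCoord (p σ : ℝ) (φ ψ : ℝ → ℝ) (m : ℕ) (τ : ℝ) : ℝ :=
  p * σ ^ m * (φ τ) ^ ((m : ℝ) / 2) / (Nat.doubleFactorial (m - 2)) *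
    ∫ u in Set.Ioi (0 : ℝ), Real.exp (4 * σ ^ 2 * ψ τ * u ^ 2 - u) * u ^ (m - 1)

open Set


noncomputable def Jraw (k : ℕ) (a : ℝ) : ℝ :=
  ∫ u in Set.Ioi (0:ℝ), Real.exp (4*a*u^2 - u) * u^k

lemma bound_integrable (k : ℕ) :
    IntegrableOn (fun u : ℝ => Real.exp (-u) * u ^ k) (Set.Ioi 0) := by
  have h := Real.GammaIntegral_convergent (s := (k:ℝ)+1) (by positivity)
  refine h.congr_fun ?_ measurableSet_Ioi
  intro x hx
  simp [add_sub_cancel_right, Real.rpow_natCast]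

lemma Jraw_integrandOn (k : ℕ) {a : ℝ} (ha : a ≤ 0) :
    IntegrableOn (fun u : ℝ => Real.exp (4*a*u^2 - u) * u^k) (Set.Ioi 0) := by
  refine Integrable.mono' (bound_integrable k)
    ((Real.continuous_exp.comp (by continuity)).mul (continuous_pow k)).aestronglyMeasurable ?_
  filter_upwards [ae_restrict_mem measurableSet_Ioi] with u hu
  have hu0 : (0:ℝ) < u := hu
  have h1 : Real.exp (4*a*u^2 - u) ≤ Real.exp (-u) := by
    apply Real.exp_le_exp.2; nlinarith
  have : ‖Real.exp (4*a*u^2 - u) * u^k‖ = Real.exp (4*a*u^2 - u) * u^k := by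
    rw [Real.norm_eq_abs, abs_of_nonneg]; positivity
  rw [this]
  exact mul_le_mul_of_nonneg_right h1 (by positivity)

lemma Jraw_hasDerivAt (k : ℕ) {a : ℝ} (ha : a < 0) :
    HasDerivAt (Jraw k) (4 * Jraw (k+2) a) a := by
  have hε : (0:ℝ) < -a/2 := by linarith
  have key := hasDerivAt_integral_of_dominated_loc_of_deriv_le (s := Metric.ball a (-a/2))
    (μ := volume.restrict (Set.Ioi (0:ℝ)))
    (F := fun x u => Real.exp (4*x*u^2 - u) * u^k)
    (F' := fun x u => (4*u^2) * (Real.exp (4*x*u^2 - u) * u^k))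
    (bound := fun u => 4 * (Real.exp (-u) * u^(k+2)))
    (x₀ := a) (Metric.ball_mem_nhds a hε)
    (Filter.Eventually.of_forall fun x =>
      ((Real.continuous_exp.comp (by continuity)).mul (continuous_pow k)).aestronglyMeasurable)
    (Jraw_integrandOn k ha.le)
    ((by continuity : Continuous fun u : ℝ => (4*u^2) * (Real.exp (4*a*u^2 - u) * u^k)).aestronglyMeasurable)
    ?_ ((bound_integrable (k+2)).const_mul 4) ?_
  · have h2 : (∫ u in Set.Ioi (0:ℝ), (4*u^2) * (Real.exp (4*a*u^2 - u) * u^k))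
        = 4 * Jraw (k+2) a := by
      rw [Jraw, ← integral_const_mul]
      congr 1; funext u; ring
    rw [← h2]; exact key.2
  · filter_upwards [ae_restrict_mem measurableSet_Ioi] with u hu
    intro x hx
    have hu0 : (0:ℝ) < u := hu
    rw [Metric.mem_ball, Real.dist_eq] at hx
    have hx0 : x ≤ 0 := by cases abs_lt.1 hx; linarith
    have h1 : Real.exp (4*x*u^2 - u) ≤ Real.exp (-u) := by
      apply Real.exp_le_exp.2; nlinarith
    have : ‖(4*u^2) * (Real.exp (4*x*u^2 - u) * u^k)‖
        = (4*u^2) * (Real.exp (4*x*u^2 - u) * u^k) := by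
      rw [Real.norm_eq_abs, abs_of_nonneg]; positivity
    rw [this]
    calc (4*u^2) * (Real.exp (4*x*u^2 - u) * u^k)
        ≤ (4*u^2) * (Real.exp (-u) * u^k) := by
          apply mul_le_mul_of_nonneg_left _ (by positivity)
          exact mul_le_mul_of_nonneg_right h1 (by positivity)
      _ = 4 * (Real.exp (-u) * u^(k+2)) := by ring
  · filter_upwards [] with u
    intro x hx
    have : HasDerivAt (fun y : ℝ => 4*y*u^2 - u) (4*u^2) x := by
      simpa using ((hasDerivAt_id x).const_mul 4).mul_const (u^2) |>.sub_const u
    have := (this.exp).mul_const (u^k)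
    exact this.congr_deriv (by ring)

lemma Jraw_continuousOn (k : ℕ) : ContinuousOn (Jraw k) (Set.Iic 0) := by
  intro a ha
  refine continuousWithinAt_of_dominated
    (bound := fun u => Real.exp (-u) * u^k)
    (Filter.Eventually.of_forall fun x =>
      ((Real.continuous_exp.comp (by continuity)).mul (continuous_pow k)).aestronglyMeasurable)
    ?_ (bound_integrable k) ?_
  · filter_upwards [self_mem_nhdsWithin] with x hx
    filter_upwards [ae_restrict_mem measurableSet_Ioi] with u hu
    have hu0 : (0:ℝ) < u := hu
    have hx0 : x ≤ 0 := hx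
    have h1 : Real.exp (4*x*u^2 - u) ≤ Real.exp (-u) := by
      apply Real.exp_le_exp.2; nlinarith
    have : ‖Real.exp (4*x*u^2 - u) * u^k‖ = Real.exp (4*x*u^2 - u) * u^k := by
      rw [Real.norm_eq_abs, abs_of_nonneg]; positivity
    rw [this]
    exact mul_le_mul_of_nonneg_right h1 (by positivity)
  · filter_upwards [] with u
    exact ((Real.continuous_exp.comp (by continuity)).mul continuous_const).continuousWithinAt

lemma Fint_eq : Fint = Jraw 1 := by
  funext a; simp [Fint, Jraw]

lemma zCoord_eq (p σ : ℝ) (φ ψ : ℝ → ℝ) (m : ℕ) (τ : ℝ) :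
    zCoord p σ φ ψ m τ =
      p * σ ^ m * (φ τ) ^ ((m : ℝ) / 2) / (Nat.doubleFactorial (m - 2)) *
        Jraw (m - 1) (σ ^ 2 * ψ τ) := by
  simp [zCoord, Jraw, mul_assoc]

/-- with `φ > 0` continuous, `φ(0)=1`, `ψ = ∫₀^τ φ`,
`φ = exp(−8θ∫₀^τ z₂³)` where `z₂ = pσ²φ F(σ²ψ)`, the functions `z_m` satisfy
`ż_m = 4m(z_{m+2} − θ z₂³ z_m)` for all even `m ≥ 2`, on any interval where
`ψ ≤ 0`. -/
theorem zCoord_ODE (θ p σ : ℝ) (hθ : 0 < θ) (hp : 0 < p) (hσ : 0 < σ)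
    (φ ψ : ℝ → ℝ)
    (hφcont : Continuous φ) (hφpos : ∀ τ, 0 < φ τ) (hφ0 : φ 0 = 1)
    (hψ : ∀ τ, ψ τ = ∫ s in (0 : ℝ)..τ, φ s)
    (hφeq : ∀ τ, φ τ =
      Real.exp (-8 * θ * ∫ s in (0 : ℝ)..τ, (p * σ ^ 2 * φ s * Fint (σ ^ 2 * ψ s)) ^ 3))
    (s : Set ℝ) (hs : IsOpen s) (hψneg : ∀ τ ∈ s, ψ τ ≤ 0) :
    ∀ m : ℕ, 2 ≤ m → Even m → ∀ τ ∈ s,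
      HasDerivAt (zCoord p σ φ ψ m)
        (4 * m * (zCoord p σ φ ψ (m + 2) τ -
          θ * (zCoord p σ φ ψ 2 τ) ^ 3 * zCoord p σ φ ψ m τ)) τ := by
  -- derivative of ψ
  have hψd : ∀ t, HasDerivAt ψ (φ t) t := by
    intro t
    have h1 : HasDerivAt (fun x => ∫ u in (0:ℝ)..x, φ u) (φ t) t :=
      intervalIntegral.integral_hasDerivAt_right (hφcont.intervalIntegrable _ _)
        hφcont.aestronglyMeasurable.stronglyMeasurableAtFilter hφcont.continuousAt
    exact h1.congr_of_eventuallyEq (Filter.Eventually.of_forall fun x => hψ x)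
  have hψcont : Continuous ψ := by
    rw [continuous_iff_continuousAt]; exact fun t => (hψd t).continuousAt
  have hψmono : StrictMono ψ := by
    apply strictMono_of_deriv_pos
    intro t; rw [(hψd t).deriv]; exact hφpos t
  have hψ0 : ψ 0 = 0 := by simp [hψ]
  intro m hm _ τ hτ
  obtain ⟨n, rfl⟩ : ∃ n, m = n + 2 := ⟨m - 2, by omega⟩
  -- τ < 0
  have hτneg : τ < 0 := by
    by_contra h; push_neg at h
    rcases eq_or_lt_of_le h with h' | h'
    · obtain ⟨ε, hε, hball⟩ := Metric.isOpen_iff.1 hs _ hτ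
      have ht : (τ + ε/2 : ℝ) ∈ s := by
        apply hball; rw [Metric.mem_ball, Real.dist_eq]
        rw [abs_of_nonneg (by linarith)]; linarith
      have h2 := hψneg _ ht
      have h3 : ψ 0 < ψ (τ + ε/2) := hψmono (by linarith)
      rw [hψ0] at h3; linarith
    · have h3 : ψ 0 < ψ τ := hψmono h'
      rw [hψ0] at h3; linarith [hψneg τ hτ]
  have hψτ : ψ τ < 0 := by
    have := hψmono hτneg; rwa [hψ0] at this
  have ha₀ : σ ^ 2 * ψ τ < 0 := mul_neg_of_pos_of_neg (by positivity) hψτ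
  have hψle : ∀ t ∈ Set.Iic (0:ℝ), σ ^ 2 * ψ t ∈ Set.Iic (0:ℝ) := by
    intro t ht
    have : ψ t ≤ ψ 0 := hψmono.monotone ht
    rw [hψ0] at this
    exact mul_nonpos_of_nonneg_of_nonpos (by positivity) this
  -- the function g = z₂³
  set g : ℝ → ℝ := fun t => (p * σ ^ 2 * φ t * Fint (σ ^ 2 * ψ t)) ^ 3 with hg
  have hFcontOn : ContinuousOn (fun t => Fint (σ ^ 2 * ψ t)) (Set.Iic 0) := by
    rw [Fint_eq]
    exact (Jraw_continuousOn 1).comp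
      ((continuous_const.mul hψcont).continuousOn) hψle
  have hgcontOn : ContinuousOn g (Set.Iic 0) := by
    exact ((continuousOn_const.mul hφcont.continuousOn).mul hFcontOn).pow 3
  have hFτ : ContinuousAt (fun t => Fint (σ ^ 2 * ψ t)) τ := by
    rw [Fint_eq]
    exact ContinuousAt.comp (g := Jraw 1) (f := fun t => σ ^ 2 * ψ t)
      ((Jraw_hasDerivAt 1 ha₀).continuousAt) ((continuous_const.mul hψcont).continuousAt)
  have hgτ : ContinuousAt g τ :=
    ((continuousAt_const.mul hφcont.continuousAt).mul hFτ).pow 3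
  -- derivative of φ
  have hφd : HasDerivAt φ (φ τ * (-8 * θ * g τ)) τ := by
    have hsub : Set.uIcc (0:ℝ) τ ⊆ Set.Iic 0 := by
      rw [Set.uIcc_of_ge hτneg.le]
      exact Set.Icc_subset_Iic_self
    have hint : IntervalIntegrable g volume 0 τ :=
      (hgcontOn.mono hsub).intervalIntegrable
    have hmeas : StronglyMeasurableAtFilter g (nhds τ) :=
      ⟨Set.Iio 0, Iio_mem_nhds hτneg,
        (hgcontOn.mono Set.Iio_subset_Iic_self).aestronglyMeasurable measurableSet_Iio⟩
    have hH : HasDerivAt (fun t => ∫ x in (0:ℝ)..t, g x) (g τ) τ :=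
      intervalIntegral.integral_hasDerivAt_right hint hmeas hgτ
    have h2 : HasDerivAt (fun t => Real.exp (-8 * θ * ∫ x in (0:ℝ)..t, g x))
        (Real.exp (-8 * θ * ∫ x in (0:ℝ)..τ, g x) * (-8 * θ * g τ)) τ :=
      (hH.const_mul (-8 * θ)).exp
    have h3 : HasDerivAt φ (Real.exp (-8 * θ * ∫ x in (0:ℝ)..τ, g x) * (-8 * θ * g τ)) τ :=
      h2.congr_of_eventuallyEq (Filter.Eventually.of_forall fun x => hφeq x)
    rwa [← hφeq τ] at h3
  -- derivative of the J part
  have hJ : HasDerivAt (fun t => Jraw (n+1) (σ ^ 2 * ψ t))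
      (4 * Jraw (n+3) (σ ^ 2 * ψ τ) * (σ ^ 2 * φ τ)) τ := by
    have hin : HasDerivAt (fun t => σ ^ 2 * ψ t) (σ ^ 2 * φ τ) τ := (hψd τ).const_mul _
    have := (Jraw_hasDerivAt (n+1) ha₀).comp τ hin
    exact this
  -- derivative of the rpow part
  have hc : ((n:ℝ) + 2) / 2 - 1 = (n:ℝ)/2 := by ring
  have hP : HasDerivAt (fun t => φ t ^ (((n+2:ℕ) : ℝ) / 2))
      ((φ τ * (-8 * θ * g τ)) * (((n:ℝ)+2)/2) * φ τ ^ ((n:ℝ)/2)) τ := by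
    have := hφd.rpow_const (p := ((n:ℝ)+2)/2) (Or.inl (hφpos τ).ne')
    rw [hc] at this
    convert this using 2
    push_cast; ring
  -- assemble
  set dn : ℝ := (Nat.doubleFactorial n : ℝ) with hdn
  have hdnpos : (0:ℝ) < dn := by
    rw [hdn]; exact_mod_cast Nat.doubleFactorial_pos n
  have hmain := ((hP.mul hJ).const_mul (p * σ ^ (n+2) / dn))
  have hfun : zCoord p σ φ ψ (n+2) = fun t =>
      (p * σ ^ (n+2) / dn) * (φ t ^ (((n+2:ℕ) : ℝ) / 2) * Jraw (n+1) (σ ^ 2 * ψ t)) := by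
    funext t
    have e1 : n + 2 - 1 = n + 1 := rfl
    have e2 : n + 2 - 2 = n := rfl
    rw [zCoord_eq, e1, e2]
    ring
  have hz : HasDerivAt (zCoord p σ φ ψ (n+2))
      (p * σ ^ (n+2) / dn *
        (φ τ * (-8 * θ * g τ) * (((n:ℝ) + 2) / 2) * φ τ ^ ((n:ℝ) / 2) * Jraw (n + 1) (σ ^ 2 * ψ τ) +
          φ τ ^ (((n + 2 : ℕ):ℝ) / 2) * (4 * Jraw (n + 3) (σ ^ 2 * ψ τ) * (σ ^ 2 * φ τ)))) τ := by
    rw [hfun]; exact hmain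
  convert hz using 1
  -- now pure algebra
  have hZ : zCoord p σ φ ψ 2 τ = p * σ ^ 2 * φ τ * Fint (σ ^ 2 * ψ τ) := by
    rw [zCoord_eq, Fint_eq]
    norm_num
  have hgZ : g τ = (zCoord p σ φ ψ 2 τ) ^ 3 := by rw [hZ]
  have hB1 : φ τ ^ (((n+2:ℕ):ℝ)/2) = φ τ ^ ((n:ℝ)/2) * φ τ := by
    have : (((n+2:ℕ):ℝ)/2) = (n:ℝ)/2 + 1 := by push_cast; ring
    rw [this, Real.rpow_add (hφpos τ), Real.rpow_one]
  have hB2 : φ τ ^ (((n+2+2:ℕ):ℝ)/2) = φ τ ^ ((n:ℝ)/2) * φ τ * φ τ := by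
    have : (((n+2+2:ℕ):ℝ)/2) = ((n:ℝ)/2 + 1) + 1 := by push_cast; ring
    rw [this, Real.rpow_add (hφpos τ), Real.rpow_add (hφpos τ), Real.rpow_one]
  have hdfac : ((Nat.doubleFactorial (n+2) : ℕ) : ℝ) = ((n:ℝ)+2) * dn := by
    rw [Nat.doubleFactorial_add_two]; push_cast; ring
  have e1 : n + 2 - 1 = n + 1 := rfl
  have e2 : n + 2 - 2 = n := rfl
  have e3 : n + 2 + 2 - 1 = n + 3 := rfl
  have e4 : n + 2 + 2 - 2 = n + 2 := rfl
  rw [zCoord_eq p σ φ ψ (n+2+2) τ, zCoord_eq p σ φ ψ (n+2) τ, hgZ, e1, e2, e3, e4]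
  rw [hdfac, hB1, hB2]
  set Z := zCoord p σ φ ψ 2 τ
  set B := φ τ ^ ((n:ℝ)/2)
  set J1 := Jraw (n+1) (σ ^ 2 * ψ τ)
  set J2 := Jraw (n+3) (σ ^ 2 * ψ τ)
  have hn2 : ((n:ℝ) + 2) ≠ 0 := by positivity
  have h1 : σ ^ (n+2+2) = σ^(n+2) * σ^2 := by ring
  push_cast
  rw [h1]
  field_simp
  ring
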